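/- If (Y_n) and (Z_n) are internested nested sequences of measurable sets and (Y_n) is regular, then (Z_n) is regular; moreover if each Y_n has positive measure then so does each Z_n, and for any measurable set X, the density m(X ∩ Y_n)/m(Y_n) tends to 1 if and only if m(X ∩ Z_n)/m(Z_n) tends to 1. -/

import Mathlib

open MeasureTheory Filter
open scoped ENNReal

lemma aux_pow {Ω : Type*} [MeasurableSpace Ω] (m : Measure Ω) (Y : ℕ → Set Ω) (δ : ℝ≥0∞)
    (h : ∀ n, δ * m (Y n) ≤ m (Y (n + 1))) (j i : ℕ) :
    δ ^ i * m (Y j) ≤ m (Y (j + i)) := by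
  induction i with
  | zero => simp
  | succ i ih =>
    calc δ ^ (i + 1) * m (Y j) = δ * (δ ^ i * m (Y j)) := by ring
      _ ≤ δ * m (Y (j + i)) := mul_le_mul_right ih _
      _ ≤ m (Y (j + i + 1)) := h _

lemma aux_compl {Ω : Type*} [MeasurableSpace Ω] (m : Measure Ω) [IsFiniteMeasure m]
    (W : ℕ → Set Ω) (hW : ∀ n, 0 < m (W n)) (X : Set Ω) (hX : MeasurableSet X) :
    Tendsto (fun n => m (X ∩ W n) / m (W n)) atTop (nhds 1) ↔
    Tendsto (fun n => m (W n \ X) / m (W n)) atTop (nhds 0) := by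
  have key : ∀ n, m (X ∩ W n) / m (W n) + m (W n \ X) / m (W n) = 1 := by
    intro n
    rw [ENNReal.div_add_div_same, Set.inter_comm, measure_inter_add_diff (W n) hX,
      ENNReal.div_self (hW n).ne' (measure_ne_top m _)]
  have hbfin : ∀ n, m (W n \ X) / m (W n) ≠ ∞ := by
    intro n
    exact (ENNReal.div_lt_top (measure_ne_top m _) (hW n).ne').ne
  have hafin : ∀ n, m (X ∩ W n) / m (W n) ≠ ∞ := by
    intro n
    exact (ENNReal.div_lt_top (measure_ne_top m _) (hW n).ne').ne
  have ha : ∀ n, m (X ∩ W n) / m (W n) = 1 - m (W n \ X) / m (W n) := by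
    intro n
    exact ENNReal.eq_sub_of_add_eq (hbfin n) (key n)
  have hb : ∀ n, m (W n \ X) / m (W n) = 1 - m (X ∩ W n) / m (W n) := by
    intro n
    refine ENNReal.eq_sub_of_add_eq (hafin n) ?_
    rw [add_comm]; exact key n
  constructor
  · intro h
    have : Tendsto (fun n => 1 - m (X ∩ W n) / m (W n)) atTop (nhds (1 - 1)) :=
      ENNReal.Tendsto.sub tendsto_const_nhds h (Or.inl ENNReal.one_ne_top)
    simpa [← hb] using this
  · intro h
    have : Tendsto (fun n => 1 - m (W n \ X) / m (W n)) atTop (nhds (1 - 0)) :=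
      ENNReal.Tendsto.sub tendsto_const_nhds h (Or.inl ENNReal.one_ne_top)
    simpa [← ha] using this

lemma aux_dir {Ω : Type*} [MeasurableSpace Ω] (m : Measure Ω) [IsFiniteMeasure m]
    (Y Z : ℕ → Set Ω) (δ : ℝ≥0∞) (k : ℕ)
    (hδ0 : 0 < δ) (hYpos : ∀ n, 0 < m (Y n)) (hYreg : ∀ n, δ * m (Y n) ≤ m (Y (n + 1)))
    (h1 : ∀ n, Y (n + k) ⊆ Z n) (h2 : ∀ n, Z (n + k) ⊆ Y n) (X : Set Ω)
    (h : Tendsto (fun n => m (Y n \ X) / m (Y n)) atTop (nhds 0)) :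
    Tendsto (fun n => m (Z n \ X) / m (Z n)) atTop (nhds 0) := by
  rw [← tendsto_add_atTop_iff_nat k]
  have hpow0 : δ ^ (2 * k) ≠ 0 := pow_ne_zero _ hδ0.ne'
  have hC : (δ ^ (2 * k))⁻¹ ≠ ∞ := by
    simp [ENNReal.inv_ne_top, hpow0]
  have hupper : Tendsto (fun j => (δ ^ (2 * k))⁻¹ * (m (Y j \ X) / m (Y j))) atTop (nhds 0) := by
    have := ENNReal.Tendsto.const_mul h (Or.inr hC)
    simpa using this
  refine tendsto_of_tendsto_of_tendsto_of_le_of_le tendsto_const_nhds hupper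
    (fun j => zero_le) (fun j => ?_)
  have hnum : m (Z (j + k) \ X) ≤ m (Y j \ X) :=
    measure_mono (Set.diff_subset_diff_left (h2 j))
  have hden : δ ^ (2 * k) * m (Y j) ≤ m (Z (j + k)) := by
    calc δ ^ (2 * k) * m (Y j) ≤ m (Y (j + 2 * k)) := aux_pow m Y δ hYreg j (2 * k)
      _ ≤ m (Z (j + k)) := by
          refine measure_mono ?_
          have : j + 2 * k = j + k + k := by ring
          rw [this]
          exact h1 (j + k)
  calc m (Z (j + k) \ X) / m (Z (j + k))
      ≤ m (Y j \ X) / (δ ^ (2 * k) * m (Y j)) := ENNReal.div_le_div hnum hden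
    _ = (δ ^ (2 * k))⁻¹ * (m (Y j \ X) / m (Y j)) := by
        rw [div_eq_mul_inv, ENNReal.mul_inv (Or.inl hpow0) (Or.inr (hYpos j).ne'),
          div_eq_mul_inv]
        ring

/-- If `(Y n)` and `(Z n)` are internested nested sequences of measurable sets and `(Y n)`
is regular (there is `δ > 0` with `m (Y n) > 0` and `m (Y (n+1)) ≥ δ · m (Y n)` for all `n`),
then `(Z n)` is regular, each `Z n` has positive measure, and for any measurable set `X`,
`m (X ∩ Y n) / m (Y n) → 1` if and only if `m (X ∩ Z n) / m (Z n) → 1`. -/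
theorem internested_regular_density {Ω : Type*} [MeasurableSpace Ω]
    (m : Measure Ω) [IsFiniteMeasure m]
    (Y Z : ℕ → Set Ω)
    (hYmeas : ∀ n, MeasurableSet (Y n)) (hZmeas : ∀ n, MeasurableSet (Z n))
    (hYnest : ∀ n, Y (n + 1) ⊆ Y n) (hZnest : ∀ n, Z (n + 1) ⊆ Z n)
    (hYreg : ∃ δ : ℝ≥0∞, 0 < δ ∧ ∀ n, 0 < m (Y n) ∧ δ * m (Y n) ≤ m (Y (n + 1)))
    (hinter : ∃ k : ℕ, 1 ≤ k ∧ ∀ n, Y (n + k) ⊆ Z n ∧ Z (n + k) ⊆ Y n) :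
    (∃ δ : ℝ≥0∞, 0 < δ ∧ ∀ n, 0 < m (Z n) ∧ δ * m (Z n) ≤ m (Z (n + 1))) ∧
    (∀ n, 0 < m (Z n)) ∧
    ∀ X : Set Ω, MeasurableSet X →
      (Tendsto (fun n => m (X ∩ Y n) / m (Y n)) atTop (nhds 1) ↔
       Tendsto (fun n => m (X ∩ Z n) / m (Z n)) atTop (nhds 1)) := by
  obtain ⟨δ, hδ0, hδ⟩ := hYreg
  obtain ⟨k, hk1, hk⟩ := hinter
  have hYpos : ∀ n, 0 < m (Y n) := fun n => (hδ n).1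
  have hZpos : ∀ n, 0 < m (Z n) :=
    fun n => lt_of_lt_of_le (hYpos (n + k)) (measure_mono (hk n).1)
  have hZtop : ∀ n, m (Z n) ≠ ∞ := fun n => measure_ne_top m _
  have hne : (Finset.range k).Nonempty := ⟨0, Finset.mem_range.mpr hk1⟩
  set c := (Finset.range k).inf' hne (fun n => m (Z (n + 1)) / m (Z n)) with hc
  set δ' := min (δ ^ (2 * k + 1)) c with hδ'
  have hδ'0 : 0 < δ' := by
    refine lt_min (ENNReal.pow_pos hδ0 _) ?_
    rw [hc, Finset.lt_inf'_iff]
    intro i _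
    exact ENNReal.div_pos (hZpos (i + 1)).ne' (hZtop i)
  have hδ'reg : ∀ n, δ' * m (Z n) ≤ m (Z (n + 1)) := by
    intro n
    rcases lt_or_ge n k with hlt | hge
    · have hle : δ' ≤ m (Z (n + 1)) / m (Z n) :=
        le_trans (min_le_right _ _)
          (Finset.inf'_le _ (Finset.mem_range.mpr hlt))
      calc δ' * m (Z n) ≤ (m (Z (n + 1)) / m (Z n)) * m (Z n) := mul_le_mul_left hle _
        _ = m (Z (n + 1)) := ENNReal.div_mul_cancel (hZpos n).ne' (hZtop n)
    · obtain ⟨j, rfl⟩ : ∃ j, n = j + k := ⟨n - k, (Nat.sub_add_cancel hge).symm⟩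
      calc δ' * m (Z (j + k))
          ≤ δ ^ (2 * k + 1) * m (Y j) :=
            mul_le_mul' (min_le_left _ _) (measure_mono (hk j).2)
        _ ≤ m (Y (j + (2 * k + 1))) := aux_pow m Y δ (fun n => (hδ n).2) j _
        _ ≤ m (Z (j + k + 1)) := by
            refine measure_mono ?_
            have : j + (2 * k + 1) = j + k + 1 + k := by ring
            rw [this]
            exact (hk (j + k + 1)).1
  refine ⟨⟨δ', hδ'0, fun n => ⟨hZpos n, hδ'reg n⟩⟩, hZpos, fun X hX => ?_⟩
  rw [aux_compl m Y hYpos X hX, aux_compl m Z hZpos X hX]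
  constructor
  · exact aux_dir m Y Z δ k hδ0 hYpos (fun n => (hδ n).2)
      (fun n => (hk n).1) (fun n => (hk n).2) X
  · exact aux_dir m Z Y δ' k hδ'0 hZpos hδ'reg
      (fun n => (hk n).2) (fun n => (hk n).1) X
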